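/- Let m ≥ 1 be an integer. Suppose N, M ≥ 1, a_1,…,a_N, A_1,…,A_N ∈ ℂ, C_1,…,C_M ∈ ℂ, and p_1,…,p_M are holomorphic polynomials such that Σ_{i=1}^N a_i·K_m(z, A_i) = Σ_{j=1}^M p_j(z)·e^{C_j z} for every z ∈ ℂ. Then the function z ↦ Σ_{i=1}^N a_i·K_m(z, A_i) is constant. -/

import Mathlib

open Complex MeasureTheory
open scoped ComplexConjugate

/-- Reproducing kernel of the Fock–Sobolev space `F^{2,m}`. -/
noncomputable def Km (m : ℕ) (z w : ℂ) : ℂ :=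
  ∑' k : ℕ, ((m.factorial : ℂ) / ((k + m).factorial : ℂ)) * (z * conj w) ^ k

/-- Gaussian type weight `|w|^{2m} e^{-|w|^2}`, as a complex number. -/
noncomputable def fsWeight (m : ℕ) (w : ℂ) : ℂ :=
  Complex.ofReal (‖w‖ ^ (2 * m) * Real.exp (-‖w‖ ^ 2))

/-- The projection `P` onto the Fock–Sobolev space, applied to `φ`. -/
noncomputable def fockProj (m : ℕ) (φ : ℂ → ℂ) (z : ℂ) : ℂ :=
  ((Real.pi : ℂ) * (m.factorial : ℂ))⁻¹ * ∫ w : ℂ, φ w * Km m z w * fsWeight m w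

/-- The semi-commutant `(T_f, T_{conj g}]` vanishes on the span of kernel functions. -/
def SemiCommVanishes (m : ℕ) (f g : ℂ → ℂ) : Prop :=
  ∀ a z : ℂ,
    fockProj m (fun w => f w * conj (g w) * Km m w a) z =
      f z * fockProj m (fun w => conj (g w) * Km m w a) z

/-- The Berezin transform on the Fock–Sobolev space `F^{2,m}`. -/
noncomputable def Berezin (m : ℕ) (φ : ℂ → ℂ) (z : ℂ) : ℂ :=
  ((Real.pi : ℂ) * (m.factorial : ℂ) * Km m z z)⁻¹ *
    ∫ w : ℂ, φ w * (Complex.ofReal (‖Km m z w‖ ^ 2)) * fsWeight m w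

/-- The norm of the Fock–Sobolev space `F^{2,m}`. -/
noncomputable def fsNorm (m : ℕ) (h : ℂ → ℂ) : ℝ :=
  Real.sqrt ((Real.pi * m.factorial)⁻¹ *
    ∫ z : ℂ, ‖h z‖ ^ 2 * ‖z‖ ^ (2 * m) * Real.exp (-‖z‖ ^ 2))

/-- The semi-commutant `(T_f, T_{conj g}]` is bounded on `F^{2,m}`. -/
def SemiCommBounded (m : ℕ) (f g : ℂ → ℂ) : Prop :=
  ∃ C > (0 : ℝ), ∀ h : Polynomial ℂ,
    fsNorm m (fun z =>
      fockProj m (fun w => f w * conj (g w) * h.eval w) z -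
        f z * fockProj m (fun w => conj (g w) * h.eval w) z) ≤
      C * fsNorm m (fun z => h.eval z)

/-- `q_m(u)`, the Taylor polynomial of `e^u` of order `m-1`. -/
noncomputable def qpoly (m : ℕ) (u : ℂ) : ℂ :=
  ∑ k ∈ Finset.range m, u ^ k / (k.factorial : ℂ)


noncomputable def Lop (ν : ℂ) (P : Polynomial ℂ) : Polynomial ℂ :=
  P.derivative + Polynomial.C ν * P

lemma Lop_eq_zero {ν : ℂ} (hν : ν ≠ 0) {P : Polynomial ℂ} (h : Lop ν P = 0) : P = 0 := by
  by_contra hP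
  have h1 : P.derivative = -(Polynomial.C ν * P) := by
    have := h
    unfold Lop at this
    linear_combination (norm := ring_nf) this
  have hd : (Polynomial.C ν * P).degree = P.degree := by
    rw [Polynomial.degree_C_mul hν]
  have hlt := Polynomial.degree_derivative_lt hP
  rw [h1, Polynomial.degree_neg] at hlt
  rw [hd] at hlt
  exact lt_irrefl _ hlt

lemma Lop_iterate_eq_zero {ν : ℂ} (hν : ν ≠ 0) {P : Polynomial ℂ} {n : ℕ}
    (h : (Lop ν)^[n] P = 0) : P = 0 := by
  induction n with
  | zero => simpa using h
  | succ n ih =>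
    rw [Function.iterate_succ_apply'] at h
    exact ih (Lop_eq_zero hν h)

lemma hasDerivAt_polyExp (P : Polynomial ℂ) (ν z : ℂ) :
    HasDerivAt (fun z => P.eval z * Complex.exp (ν * z))
      ((Lop ν P).eval z * Complex.exp (ν * z)) z := by
  have h2 : HasDerivAt (fun z : ℂ => Complex.exp (ν * z)) (Complex.exp (ν * z) * ν) z := by
    simpa using ((hasDerivAt_id z).const_mul ν).cexp
  have := (P.hasDerivAt z).fun_mul h2
  refine this.congr_deriv ?_
  simp only [Lop, Polynomial.eval_add, Polynomial.eval_mul, Polynomial.eval_C]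
  ring

lemma expPoly_step (s : Finset ℂ) (Q : ℂ → Polynomial ℂ)
    (h : ∀ z, ∑ ν ∈ s, (Q ν).eval z * Complex.exp (ν * z) = 0) :
    ∀ z, ∑ ν ∈ s, (Lop ν (Q ν)).eval z * Complex.exp (ν * z) = 0 := by
  intro z
  have h0 : HasDerivAt (fun z => ∑ ν ∈ s, (Q ν).eval z * Complex.exp (ν * z))
      (∑ ν ∈ s, (Lop ν (Q ν)).eval z * Complex.exp (ν * z)) z :=
    HasDerivAt.fun_sum fun ν _ => hasDerivAt_polyExp (Q ν) ν z
  have h1 : (fun z => ∑ ν ∈ s, (Q ν).eval z * Complex.exp (ν * z)) = fun _ => (0 : ℂ) :=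
    funext h
  rw [h1] at h0
  exact ((hasDerivAt_const z (0 : ℂ)).unique h0).symm

lemma expPoly_iter (s : Finset ℂ) (Q : ℂ → Polynomial ℂ)
    (h : ∀ z, ∑ ν ∈ s, (Q ν).eval z * Complex.exp (ν * z) = 0) (n : ℕ) :
    ∀ z, ∑ ν ∈ s, ((Lop ν)^[n] (Q ν)).eval z * Complex.exp (ν * z) = 0 := by
  induction n with
  | zero => simpa using h
  | succ n ih =>
    have := expPoly_step s (fun ν => (Lop ν)^[n] (Q ν)) ih
    intro z
    have h2 := this z
    simpa only [Function.iterate_succ_apply'] using h2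

lemma expPoly_indep_aux : ∀ n : ℕ, ∀ s : Finset ℂ, s.card = n → ∀ Q : ℂ → Polynomial ℂ,
    (∀ z, ∑ ν ∈ s, (Q ν).eval z * Complex.exp (ν * z) = 0) → ∀ ν ∈ s, Q ν = 0 := by
  intro n
  induction n with
  | zero =>
    intro s hs Q h ν hν
    rw [Finset.card_eq_zero.mp hs] at hν
    simp at hν
  | succ n ih =>
    intro s hs Q h ν₀ hν₀
    classical
    set s' : Finset ℂ := s.image (· - ν₀) with hs'
    have hinj : Function.Injective (· - ν₀) := fun x y hxy => by
      simpa using congrArg (· + ν₀) hxy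
    have hcard' : s'.card = n + 1 := by
      rw [hs', Finset.card_image_of_injective _ hinj, hs]
    have h0s' : (0 : ℂ) ∈ s' := by
      rw [hs']
      exact Finset.mem_image.mpr ⟨ν₀, hν₀, by ring⟩
    set Q' : ℂ → Polynomial ℂ := fun ν => Q (ν + ν₀) with hQ'
    have h' : ∀ z, ∑ ν ∈ s', (Q' ν).eval z * Complex.exp (ν * z) = 0 := by
      intro z
      rw [hs', Finset.sum_image (fun x _ y _ hxy => hinj hxy)]
      have : ∀ μ ∈ s, (Q' (μ - ν₀)).eval z * Complex.exp ((μ - ν₀) * z)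
          = ((Q μ).eval z * Complex.exp (μ * z)) * Complex.exp (-(ν₀ * z)) := by
        intro μ _
        rw [hQ']
        simp only [sub_add_cancel]
        rw [mul_assoc, ← Complex.exp_add]
        ring_nf
      rw [Finset.sum_congr rfl this, ← Finset.sum_mul, h z, zero_mul]
    set n0 : ℕ := (Q' 0).natDegree + 1 with hn0
    have hiter := expPoly_iter s' Q' h' n0
    -- the ν = 0 term vanishes
    have hzero : (Lop 0)^[n0] (Q' 0) = 0 := by
      have hL : Lop (0 : ℂ) = fun P => P.derivative := by
        funext P
        simp [Lop]
      rw [hL]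
      exact Polynomial.iterate_derivative_eq_zero (by omega)
    have herase : ∀ z, ∑ ν ∈ s'.erase 0, ((Lop ν)^[n0] (Q' ν)).eval z * Complex.exp (ν * z)
        = 0 := by
      intro z
      have := Finset.sum_erase_add s'
        (fun ν => ((Lop ν)^[n0] (Q' ν)).eval z * Complex.exp (ν * z)) h0s'
      rw [hiter z] at this
      simp only [hzero] at this
      simpa using this
    have hcard'' : (s'.erase 0).card = n := by
      rw [Finset.card_erase_of_mem h0s', hcard']
      omega
    have hkey := ih (s'.erase 0) hcard'' (fun ν => (Lop ν)^[n0] (Q' ν)) herase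
    have hQ'zero : ∀ ν ∈ s'.erase 0, Q' ν = 0 := by
      intro ν hν
      have hν0 : ν ≠ 0 := Finset.ne_of_mem_erase hν
      exact Lop_iterate_eq_zero hν0 (hkey ν hν)
    -- now Q' 0 = 0
    have hQ0 : Q' 0 = 0 := by
      apply Polynomial.funext
      intro z
      have := h' z
      have hsplit := Finset.sum_erase_add s'
        (fun ν => (Q' ν).eval z * Complex.exp (ν * z)) h0s'
      rw [this] at hsplit
      have hrest : ∑ ν ∈ s'.erase 0, (Q' ν).eval z * Complex.exp (ν * z) = 0 := by
        apply Finset.sum_eq_zero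
        intro ν hν
        rw [hQ'zero ν hν]
        simp
      rw [hrest] at hsplit
      simpa using hsplit
    have : Q ν₀ = Q' 0 := by rw [hQ']; norm_num
    rw [this, hQ0]

lemma expPoly_group {ι : Type*} [Fintype ι] (μ : ι → ℂ) (P : ι → Polynomial ℂ)
    (h : ∀ z, ∑ i, (P i).eval z * Complex.exp (μ i * z) = 0) (lam : ℂ) :
    ∑ i ∈ Finset.univ.filter (fun i => μ i = lam), P i = 0 := by
  classical
  set s : Finset ℂ := Finset.univ.image μ with hs
  set Q : ℂ → Polynomial ℂ := fun ν => ∑ i ∈ Finset.univ.filter (fun i => μ i = ν), P i with hQ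
  have key : ∀ ν ∈ s, Q ν = 0 := by
    apply expPoly_indep_aux s.card s rfl
    intro z
    have hfib := Finset.sum_fiberwise_of_maps_to
      (fun i (_ : i ∈ Finset.univ) => Finset.mem_image_of_mem μ (Finset.mem_univ i))
      (fun i => (P i).eval z * Complex.exp (μ i * z))
    rw [← h z, ← hfib]
    apply Finset.sum_congr rfl
    intro ν _
    rw [hQ]
    simp only [Polynomial.eval_finset_sum, Finset.sum_mul]
    apply Finset.sum_congr rfl
    intro i hi
    rw [(Finset.mem_filter.mp hi).2]
  by_cases hl : lam ∈ s
  · exact key lam hl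
  · have hempty : Finset.univ.filter (fun i => μ i = lam) = ∅ := by
      apply Finset.filter_eq_empty_iff.mpr
      intro i _ hcontra
      exact hl (hcontra ▸ Finset.mem_image_of_mem μ (Finset.mem_univ i))
    rw [hempty, Finset.sum_empty]

lemma Km_zero_right (m : ℕ) (z : ℂ) : Km m z 0 = 1 := by
  unfold Km
  rw [tsum_eq_single 0]
  · simp [Nat.factorial_ne_zero]
  · intro k hk
    simp [zero_pow hk]

lemma series_closed (m : ℕ) (u : ℂ) :
    u ^ m * ∑' k : ℕ, ((m.factorial : ℂ) / ((k + m).factorial : ℂ)) * u ^ k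
      = (m.factorial : ℂ) * (Complex.exp u - qpoly m u) := by
  have hsum : Summable (fun n : ℕ => u ^ n / (n.factorial : ℂ)) :=
    NormedSpace.expSeries_div_summable u
  have hshift : Summable (fun k : ℕ => u ^ (k + m) / ((k + m).factorial : ℂ)) :=
    ((summable_nat_add_iff m).mpr hsum)
  have h1 : ∀ k : ℕ, u ^ m * (((m.factorial : ℂ) / ((k + m).factorial : ℂ)) * u ^ k)
      = (m.factorial : ℂ) * (u ^ (k + m) / ((k + m).factorial : ℂ)) := by
    intro k
    have hne : (((k + m).factorial : ℂ)) ≠ 0 := by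
      exact_mod_cast Nat.cast_ne_zero.mpr (Nat.factorial_ne_zero _)
    field_simp
    ring
  calc u ^ m * ∑' k : ℕ, ((m.factorial : ℂ) / ((k + m).factorial : ℂ)) * u ^ k
      = ∑' k : ℕ, u ^ m * (((m.factorial : ℂ) / ((k + m).factorial : ℂ)) * u ^ k) :=
        (tsum_mul_left).symm
    _ = ∑' k : ℕ, (m.factorial : ℂ) * (u ^ (k + m) / ((k + m).factorial : ℂ)) := by
        exact tsum_congr h1
    _ = (m.factorial : ℂ) * ∑' k : ℕ, u ^ (k + m) / ((k + m).factorial : ℂ) := tsum_mul_left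
    _ = (m.factorial : ℂ) * (Complex.exp u - qpoly m u) := by
        congr 1
        have hsplit := Summable.sum_add_tsum_nat_add (f := fun n : ℕ => u ^ n / (n.factorial : ℂ)) m hsum
        have hexp : ∑' n : ℕ, u ^ n / (n.factorial : ℂ) = Complex.exp u := by
          rw [Complex.exp_eq_exp_ℂ, NormedSpace.exp_eq_tsum_div]
        rw [hexp] at hsplit
        unfold qpoly
        linear_combination hsplit

lemma Km_closed {m : ℕ} {w : ℂ} (hw : w ≠ 0) (z : ℂ) :
    z ^ m * Km m z w =
      ((m.factorial : ℂ) / (conj w) ^ m) *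
        (Complex.exp (conj w * z) - qpoly m (conj w * z)) := by
  have hcw : (conj w : ℂ) ≠ 0 := by
    simpa using hw
  have hcwm : ((conj w) ^ m : ℂ) ≠ 0 := pow_ne_zero _ hcw
  have key : (conj w) ^ m * (z ^ m * Km m z w)
      = (m.factorial : ℂ) * (Complex.exp (conj w * z) - qpoly m (conj w * z)) := by
    have h := series_closed m (z * conj w)
    have hKm : Km m z w = ∑' k : ℕ,
        ((m.factorial : ℂ) / ((k + m).factorial : ℂ)) * (z * conj w) ^ k := rfl
    rw [hKm]
    calc (conj w) ^ m * (z ^ m * ∑' k : ℕ,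
          ((m.factorial : ℂ) / ((k + m).factorial : ℂ)) * (z * conj w) ^ k)
        = (z * conj w) ^ m * ∑' k : ℕ,
          ((m.factorial : ℂ) / ((k + m).factorial : ℂ)) * (z * conj w) ^ k := by
          rw [mul_pow]; ring
      _ = (m.factorial : ℂ) * (Complex.exp (z * conj w) - qpoly m (z * conj w)) := h
      _ = (m.factorial : ℂ) * (Complex.exp (conj w * z) - qpoly m (conj w * z)) := by
          rw [mul_comm z (conj w)]
  have hrw : z ^ m * Km m z w = ((conj w) ^ m * (z ^ m * Km m z w)) / (conj w) ^ m := by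
    field_simp
  rw [hrw, key]
  ring

noncomputable def qPol (m : ℕ) (c : ℂ) : Polynomial ℂ :=
  ∑ k ∈ Finset.range m, Polynomial.C (c ^ k / (k.factorial : ℂ)) * Polynomial.X ^ k

lemma qPol_eval (m : ℕ) (c z : ℂ) : (qPol m c).eval z = qpoly m (c * z) := by
  unfold qPol qpoly
  rw [Polynomial.eval_finset_sum]
  apply Finset.sum_congr rfl
  intro k _
  simp [mul_pow]
  ring

theorem stmt_18 (m : ℕ) (hm : 1 ≤ m) (N M : ℕ) (hN : 1 ≤ N) (hM : 1 ≤ M)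
    (a : Fin N → ℂ) (A : Fin N → ℂ) (Cc : Fin M → ℂ) (p : Fin M → Polynomial ℂ)
    (h : ∀ z : ℂ, ∑ i, a i * Km m z (A i) = ∑ j, (p j).eval z * Complex.exp (Cc j * z)) :
    ∃ c : ℂ, ∀ z : ℂ, ∑ i, a i * Km m z (A i) = c := by
  classical
  have hconjinj : ∀ x y : ℂ, conj x = conj y ↔ x = y := fun x y =>
    ⟨fun hc => by simpa using congrArg conj hc, fun hc => by rw [hc]⟩
  have hconjne : ∀ x : ℂ, x ≠ 0 → conj x ≠ 0 := fun x hx hc => by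
    simp only [map_eq_zero] at hc; exact hx hc
  set b : ℂ → ℂ := fun w => (m.factorial : ℂ) / (conj w) ^ m with hb
  set μfun : (Fin N ⊕ Fin N) ⊕ Fin M → ℂ :=
    Sum.elim (Sum.elim (fun i => conj (A i)) (fun _ => 0)) Cc with hμ
  set Pfun : (Fin N ⊕ Fin N) ⊕ Fin M → Polynomial ℂ :=
    Sum.elim (Sum.elim
      (fun i => if A i = 0 then Polynomial.C (a i) * Polynomial.X ^ m
        else Polynomial.C (a i * b (A i)))
      (fun i => if A i = 0 then 0
        else -(Polynomial.C (a i * b (A i)) * qPol m (conj (A i)))))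
      (fun j => -(Polynomial.X ^ m * p j)) with hP
  have hmain : ∀ z, ∑ i, (Pfun i).eval z * Complex.exp (μfun i * z) = 0 := by
    intro z
    rw [Fintype.sum_sum_type, Fintype.sum_sum_type]
    have e1 : ∀ i : Fin N,
        (Pfun (Sum.inl (Sum.inl i))).eval z * Complex.exp (μfun (Sum.inl (Sum.inl i)) * z)
          + (Pfun (Sum.inl (Sum.inr i))).eval z * Complex.exp (μfun (Sum.inl (Sum.inr i)) * z)
        = a i * (z ^ m * Km m z (A i)) := by
      intro i
      by_cases hA : A i = 0
      · simp only [hP, hμ, Sum.elim_inl, Sum.elim_inr, if_pos hA, hA, map_zero]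
        rw [Km_zero_right]
        simp
      · simp only [hP, hμ, Sum.elim_inl, Sum.elim_inr, if_neg hA]
        rw [Km_closed hA]
        simp only [Polynomial.eval_neg, Polynomial.eval_mul, Polynomial.eval_C, qPol_eval,
          zero_mul, Complex.exp_zero, mul_one, hb]
        ring
    have hsum12 : (∑ i : Fin N,
          (Pfun (Sum.inl (Sum.inl i))).eval z * Complex.exp (μfun (Sum.inl (Sum.inl i)) * z))
        + (∑ i : Fin N,
          (Pfun (Sum.inl (Sum.inr i))).eval z * Complex.exp (μfun (Sum.inl (Sum.inr i)) * z))
        = z ^ m * ∑ i, a i * Km m z (A i) := by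
      rw [← Finset.sum_add_distrib, Finset.mul_sum]
      apply Finset.sum_congr rfl
      intro i _
      rw [e1 i]; ring
    have hsum3 : (∑ j : Fin M,
          (Pfun (Sum.inr j)).eval z * Complex.exp (μfun (Sum.inr j) * z))
        = -(z ^ m * ∑ j, (p j).eval z * Complex.exp (Cc j * z)) := by
      simp only [hP, hμ, Sum.elim_inr, Polynomial.eval_neg, Polynomial.eval_mul,
        Polynomial.eval_pow, Polynomial.eval_X]
      rw [Finset.mul_sum, ← Finset.sum_neg_distrib]
      apply Finset.sum_congr rfl
      intro j _
      ring
    rw [hsum12, hsum3, h z]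
    ring
  have hfiber : ∀ i0 : Fin N, A i0 ≠ 0 →
      ∑ i ∈ Finset.univ.filter (fun i => A i = A i0), a i = 0 := by
    intro i0 hA0
    have hgrp := expPoly_group μfun Pfun hmain (conj (A i0))
    have hc := congrArg (fun q : Polynomial ℂ => q.coeff 0) hgrp
    simp only [Polynomial.finset_sum_coeff, Polynomial.coeff_zero] at hc
    rw [Finset.sum_filter, Fintype.sum_sum_type, Fintype.sum_sum_type] at hc
    have p2 : (∑ i : Fin N, if μfun (Sum.inl (Sum.inr i)) = conj (A i0) then
        (Pfun (Sum.inl (Sum.inr i))).coeff 0 else 0) = 0 := by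
      apply Finset.sum_eq_zero
      intro i _
      simp only [hμ, Sum.elim_inl, Sum.elim_inr]
      rw [if_neg]
      exact fun hc0 => hconjne _ hA0 hc0.symm
    have p3 : (∑ j : Fin M, if μfun (Sum.inr j) = conj (A i0) then
        (Pfun (Sum.inr j)).coeff 0 else 0) = 0 := by
      apply Finset.sum_eq_zero
      intro j _
      have hco : (Pfun (Sum.inr j)).coeff 0 = 0 := by
        simp only [hP, Sum.elim_inr, Polynomial.coeff_neg, Polynomial.coeff_zero_eq_eval_zero]
        simp [zero_pow (by omega : m ≠ 0)]
      rw [hco]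
      simp
    have p1 : (∑ i : Fin N, if μfun (Sum.inl (Sum.inl i)) = conj (A i0) then
        (Pfun (Sum.inl (Sum.inl i))).coeff 0 else 0)
        = b (A i0) * ∑ i ∈ Finset.univ.filter (fun i => A i = A i0), a i := by
      rw [Finset.mul_sum, Finset.sum_filter]
      apply Finset.sum_congr rfl
      intro i _
      simp only [hμ, hP, Sum.elim_inl]
      by_cases hAi : A i = A i0
      · rw [if_pos (by rw [hAi]), if_pos hAi, if_neg (by rw [hAi]; exact hA0)]
        rw [Polynomial.coeff_C_zero, hAi]
        ring
      · rw [if_neg (fun hc0 => hAi ((hconjinj _ _).mp hc0)), if_neg hAi]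
    rw [p1, p2, p3] at hc
    have hbne : b (A i0) ≠ 0 := by
      rw [hb]
      apply div_ne_zero
      · exact_mod_cast Nat.cast_ne_zero.mpr (Nat.factorial_ne_zero m)
      · exact pow_ne_zero _ (hconjne _ hA0)
    have := hc
    simp only [add_zero] at this
    exact (mul_eq_zero.mp this).resolve_left hbne
  refine ⟨∑ i ∈ Finset.univ.filter (fun i => A i = 0), a i, ?_⟩
  intro z
  rw [← Finset.sum_filter_add_sum_filter_not Finset.univ (fun i => A i = 0)
      (fun i => a i * Km m z (A i))]
  have h1 : ∑ i ∈ Finset.univ.filter (fun i => A i = 0), a i * Km m z (A i)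
      = ∑ i ∈ Finset.univ.filter (fun i => A i = 0), a i := by
    apply Finset.sum_congr rfl
    intro i hi
    rw [(Finset.mem_filter.mp hi).2, Km_zero_right, mul_one]
  have h2 : ∑ i ∈ Finset.univ.filter (fun i => ¬ A i = 0), a i * Km m z (A i) = 0 := by
    set t := Finset.univ.filter (fun i => ¬ A i = 0) with ht
    have hmaps : ∀ i ∈ t, A i ∈ t.image A := fun i hi => Finset.mem_image_of_mem A hi
    rw [← Finset.sum_fiberwise_of_maps_to hmaps (fun i => a i * Km m z (A i))]
    apply Finset.sum_eq_zero
    intro w hw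
    obtain ⟨i0, hi0t, hAi0⟩ := Finset.mem_image.mp hw
    have hA0 : A i0 ≠ 0 := by
      have := Finset.mem_filter.mp hi0t
      exact this.2
    have inner : ∑ i ∈ t.filter (fun i => A i = w), a i * Km m z (A i)
        = Km m z w * ∑ i ∈ t.filter (fun i => A i = w), a i := by
      rw [Finset.mul_sum]
      apply Finset.sum_congr rfl
      intro i hi
      rw [(Finset.mem_filter.mp hi).2]
      ring
    rw [inner]
    have heq : t.filter (fun i => A i = w) = Finset.univ.filter (fun i => A i = A i0) := by
      subst hAi0
      ext i
      simp only [ht, Finset.mem_filter, Finset.mem_univ, true_and]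
      constructor
      · exact fun hx => hx.2
      · exact fun hx => ⟨by rw [hx]; exact hA0, hx⟩
    rw [heq, hfiber i0 hA0, mul_zero]
  rw [h1, h2, add_zero]
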